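/- For every n with n ≡ 1, 2 or 3 (mod 4), there exist a cubic form α : 𝔽₂ⁿ → 𝔽₂ and a subset A ⊆ 𝔽₂ⁿ with |A| = ρ(2ⁿ) such that α(x + x') = 1 for every two distinct elements x, x' ∈ A, where ρ(2ⁿ) = 2n if n ≡ 1 or 2 (mod 4) and ρ(2ⁿ) = 2n+2 if n ≡ 3 (mod 4). (Sharpness of the bound |A| ≤ ρ(2ⁿ).) -/

import Mathlib

open Finset
open scoped symmDiff



lemma count_pairs_triples {α : Type*} [LinearOrder α] (S : Finset α) :
    ((S ×ˢ S).filter fun p => p.1 < p.2).card = S.card.choose 2 ∧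
    (((S ×ˢ S) ×ˢ S).filter fun p => p.1.1 < p.1.2 ∧ p.1.2 < p.2).card = S.card.choose 3 := by
  classical
  induction S using Finset.strongInduction with
  | _ S ih =>
  rcases S.eq_empty_or_nonempty with rfl | hne
  · simp
  · set M := S.max' hne with hMdef
    have hM : M ∈ S := S.max'_mem hne
    set S' := S.erase M with hS'def
    have hss : S' ⊂ S := Finset.erase_ssubset hM
    obtain ⟨ih2, ih3⟩ := ih S' hss
    have hcard : S.card = S'.card + 1 := by
      rw [hS'def, Finset.card_erase_of_mem hM]
      have : 0 < S.card := Finset.card_pos.mpr hne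
      omega
    have hle : ∀ x ∈ S, x ≤ M := fun x hx => S.le_max' x hx
    have hmemS' : ∀ x, x ∈ S' ↔ x ∈ S ∧ x ≠ M := by
      intro x; rw [hS'def, Finset.mem_erase]; tauto
    have hP : ((S ×ˢ S).filter fun p => p.1 < p.2)
        = ((S' ×ˢ S').filter fun p => p.1 < p.2) ∪ S'.image (fun a => (a, M)) := by
      ext ⟨a, b⟩
      simp only [mem_filter, mem_product, mem_union, mem_image, hmemS']
      constructor
      · rintro ⟨⟨ha, hb⟩, hab⟩
        rcases eq_or_ne b M with rfl | hbM
        · exact Or.inr ⟨a, ⟨⟨ha, ne_of_lt hab⟩, rfl⟩⟩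
        · exact Or.inl ⟨⟨⟨ha, ne_of_lt (lt_of_lt_of_le hab (hle b hb))⟩, hb, hbM⟩, hab⟩
      · rintro (⟨⟨⟨ha, _⟩, hb, _⟩, hab⟩ | ⟨x, ⟨⟨hx, hxM⟩, heq⟩⟩)
        · exact ⟨⟨ha, hb⟩, hab⟩
        · injection heq with h1 h2; subst h1; subst h2
          exact ⟨⟨hx, hM⟩, lt_of_le_of_ne (hle _ hx) hxM⟩
    have hPd : Disjoint ((S' ×ˢ S').filter fun p => p.1 < p.2) (S'.image (fun a => (a, M))) := by
      rw [Finset.disjoint_left]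
      rintro ⟨a, b⟩ hab hmem
      simp only [mem_filter, mem_product, hmemS'] at hab
      simp only [mem_image] at hmem
      obtain ⟨x, _, heq⟩ := hmem
      injection heq with h1 h2
      exact hab.1.2.2 h2.symm
    have hPim : (S'.image (fun a => (a, M))).card = S'.card :=
      Finset.card_image_of_injective _ (fun a b hab => by injection hab)
    have h2 : ((S ×ˢ S).filter fun p => p.1 < p.2).card = S.card.choose 2 := by
      rw [hP, Finset.card_union_of_disjoint hPd, ih2, hPim, hcard]
      rw [Nat.choose_succ_succ]
      simp [Nat.choose_one_right]
      omega
    refine ⟨h2, ?_⟩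
    have hT : (((S ×ˢ S) ×ˢ S).filter fun p => p.1.1 < p.1.2 ∧ p.1.2 < p.2)
        = (((S' ×ˢ S') ×ˢ S').filter fun p => p.1.1 < p.1.2 ∧ p.1.2 < p.2)
          ∪ ((S' ×ˢ S').filter fun p => p.1 < p.2).image (fun p => (p, M)) := by
      ext ⟨⟨a, b⟩, k⟩
      simp only [mem_filter, mem_product, mem_union, mem_image, hmemS']
      constructor
      · rintro ⟨⟨⟨ha, hb⟩, hk⟩, hab, hbk⟩
        rcases eq_or_ne k M with rfl | hkM
        · exact Or.inr ⟨(a, b), ⟨⟨⟨⟨ha, ne_of_lt (lt_trans hab hbk)⟩,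
            hb, ne_of_lt hbk⟩, hab⟩, rfl⟩⟩
        · have hkM' : k < M := lt_of_le_of_ne (hle k hk) hkM
          exact Or.inl ⟨⟨⟨⟨ha, ne_of_lt (lt_trans hab (lt_trans hbk hkM'))⟩,
            hb, ne_of_lt (lt_trans hbk hkM')⟩, hk, hkM⟩, hab, hbk⟩
      · rintro (⟨⟨⟨⟨ha, _⟩, hb, _⟩, hk, _⟩, hab, hbk⟩ | ⟨⟨x, y⟩, ⟨⟨⟨⟨hx, hxM⟩, hy, hyM⟩, hxy⟩, heq⟩⟩)
        · exact ⟨⟨⟨ha, hb⟩, hk⟩, hab, hbk⟩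
        · injection heq with h1 h2
          injection h1 with h3 h4
          subst h3; subst h4; subst h2
          exact ⟨⟨⟨hx, hy⟩, hM⟩, hxy, lt_of_le_of_ne (hle _ hy) hyM⟩
    have hTd : Disjoint (((S' ×ˢ S') ×ˢ S').filter fun p => p.1.1 < p.1.2 ∧ p.1.2 < p.2)
        (((S' ×ˢ S').filter fun p => p.1 < p.2).image (fun p => (p, M))) := by
      rw [Finset.disjoint_left]
      rintro ⟨⟨a, b⟩, k⟩ habk hmem
      simp only [mem_filter, mem_product, hmemS'] at habk
      simp only [mem_image] at hmem
      obtain ⟨x, _, heq⟩ := hmem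
      injection heq with h1 h2
      exact habk.1.2.2 h2.symm
    have hTim : (((S' ×ˢ S').filter fun p => p.1 < p.2).image (fun p => (p, M))).card
        = ((S' ×ˢ S').filter fun p => p.1 < p.2).card :=
      Finset.card_image_of_injective _ (fun a b hab => by injection hab)
    rw [hT, Finset.card_union_of_disjoint hTd, ih3, hTim, ih2, hcard]
    rw [Nat.choose_succ_succ]
    exact Nat.add_comm _ _

open Finset

def chiF {n : ℕ} (S : Finset (Fin n)) : Fin n → ZMod 2 := fun i => if i ∈ S then 1 else 0

def ccoef (n : ℕ) : Fin n → Fin n → Fin n → ZMod 2 := fun i j k => if i = j ∨ j ≠ k then 1 else 0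

noncomputable def alphaF (n : ℕ) (x : Fin n → ZMod 2) : ZMod 2 :=
  ∑ i, ∑ j, ∑ k, if i ≤ j ∧ j ≤ k then ccoef n i j k * x i * x j * x k else 0

lemma term_split {n : ℕ} (S : Finset (Fin n)) (i j k : Fin n) :
    (if i ≤ j ∧ j ≤ k then ccoef n i j k * chiF S i * chiF S j * chiF S k else 0)
      = (if i = j ∧ j = k ∧ i ∈ S then (1 : ZMod 2) else 0)
        + (if i = j ∧ (j < k ∧ j ∈ S ∧ k ∈ S) then (1 : ZMod 2) else 0)
        + (if (i < j ∧ j < k) ∧ i ∈ S ∧ j ∈ S ∧ k ∈ S then (1 : ZMod 2) else 0) := by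
  unfold ccoef chiF
  by_cases hi : i ∈ S <;> by_cases hj : j ∈ S <;> by_cases hk : k ∈ S <;>
    simp only [hi, hj, hk, not_true, not_false_iff, and_true, and_false, true_and, false_and,
      if_true, if_false, ite_true, ite_false, mul_one, mul_zero, one_mul, zero_mul,
      add_zero, zero_add] <;>
    split_ifs <;>
    first
      | decide
      | (exfalso
         simp only [Fin.lt_def, Fin.le_def, Fin.ext_iff, not_and_or, not_or, not_lt, not_le,
           ne_eq, not_not] at *
         casesm* _ ∨ _, _ ∧ _ <;> first | omega | simp_all [← Fin.ext_iff])

lemma sum3_boole {n : ℕ} (P : Fin n → Fin n → Fin n → Prop) [∀ i j k, Decidable (P i j k)] :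
    (∑ i, ∑ j, ∑ k, if P i j k then (1 : ZMod 2) else 0)
      = ((((Finset.univ ×ˢ Finset.univ) ×ˢ Finset.univ).filter
          (fun p : (Fin n × Fin n) × Fin n => P p.1.1 p.1.2 p.2)).card : ZMod 2) := by
  have h1 : (∑ p ∈ (Finset.univ ×ˢ Finset.univ) ×ˢ Finset.univ,
      if P p.1.1 p.1.2 p.2 then (1 : ZMod 2) else 0) = ∑ i, ∑ j, ∑ k, if P i j k then (1 : ZMod 2) else 0 := by
    rw [Finset.sum_product, Finset.sum_product]
  rw [← h1, Finset.sum_boole]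

lemma alphaF_chi {n : ℕ} (S : Finset (Fin n)) :
    alphaF n (chiF S) = ((S.card + S.card.choose 2 + S.card.choose 3 : ℕ) : ZMod 2) := by
  unfold alphaF
  have e1 : (∑ i, ∑ j, ∑ k, if i ≤ j ∧ j ≤ k then ccoef n i j k * chiF S i * chiF S j * chiF S k else 0)
      = (∑ i, ∑ j, ∑ k, if i = j ∧ j = k ∧ i ∈ S then (1 : ZMod 2) else 0)
        + (∑ i, ∑ j, ∑ k, if i = j ∧ (j < k ∧ j ∈ S ∧ k ∈ S) then (1 : ZMod 2) else 0)
        + (∑ i, ∑ j, ∑ k, if (i < j ∧ j < k) ∧ i ∈ S ∧ j ∈ S ∧ k ∈ S then (1 : ZMod 2) else 0) := by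
    simp only [← Finset.sum_add_distrib]
    exact Finset.sum_congr rfl fun i _ => Finset.sum_congr rfl fun j _ =>
      Finset.sum_congr rfl fun k _ => term_split S i j k
  rw [e1]
  -- first sum
  have s1 : (∑ i, ∑ j, ∑ k, if i = j ∧ j = k ∧ i ∈ S then (1 : ZMod 2) else 0)
      = (S.card : ZMod 2) := by
    rw [sum3_boole]
    congr 1
    have : (((Finset.univ ×ˢ Finset.univ) ×ˢ Finset.univ).filter
        (fun p : (Fin n × Fin n) × Fin n => p.1.1 = p.1.2 ∧ p.1.2 = p.2 ∧ p.1.1 ∈ S))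
        = S.image (fun a => ((a, a), a)) := by
      ext ⟨⟨a, b⟩, c⟩
      simp only [Finset.mem_filter, Finset.mem_product, Finset.mem_image, Finset.mem_univ,
        true_and]
      constructor
      · rintro ⟨rfl, rfl, h⟩; exact ⟨a, h, rfl⟩
      · rintro ⟨x, hx, heq⟩
        injection heq with h1 h2; injection h1 with h3 h4
        subst h3; subst h4; subst h2
        exact ⟨rfl, rfl, hx⟩
    rw [this, Finset.card_image_of_injective _ (fun a b hab => by injection hab)]
  -- second sum
  have s2 : (∑ i, ∑ j, ∑ k, if i = j ∧ (j < k ∧ j ∈ S ∧ k ∈ S) then (1 : ZMod 2) else 0)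
      = (S.card.choose 2 : ZMod 2) := by
    rw [sum3_boole]
    have : (((Finset.univ ×ˢ Finset.univ) ×ˢ Finset.univ).filter
        (fun p : (Fin n × Fin n) × Fin n => p.1.1 = p.1.2 ∧ (p.1.2 < p.2 ∧ p.1.2 ∈ S ∧ p.2 ∈ S)))
        = ((S ×ˢ S).filter fun p => p.1 < p.2).image (fun p => ((p.1, p.1), p.2)) := by
      ext ⟨⟨a, b⟩, c⟩
      simp only [Finset.mem_filter, Finset.mem_product, Finset.mem_image, Finset.mem_univ,
        true_and]
      constructor
      · rintro ⟨rfl, hlt, hb, hc⟩; exact ⟨(a, c), ⟨⟨hb, hc⟩, hlt⟩, rfl⟩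
      · rintro ⟨⟨x, y⟩, ⟨⟨hx, hy⟩, hxy⟩, heq⟩
        injection heq with h1 h2; injection h1 with h3 h4
        subst h3; subst h4; subst h2
        exact ⟨rfl, hxy, hx, hy⟩
    rw [this, Finset.card_image_of_injective _
      (fun a b hab => by
        injection hab with h1 h2; injection h1 with h3 _
        exact Prod.ext h3 h2)]
    rw [(count_pairs_triples S).1]
  -- third sum
  have s3 : (∑ i, ∑ j, ∑ k, if (i < j ∧ j < k) ∧ i ∈ S ∧ j ∈ S ∧ k ∈ S then (1 : ZMod 2) else 0)
      = (S.card.choose 3 : ZMod 2) := by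
    rw [sum3_boole]
    have : (((Finset.univ ×ˢ Finset.univ) ×ˢ Finset.univ).filter
        (fun p : (Fin n × Fin n) × Fin n => (p.1.1 < p.1.2 ∧ p.1.2 < p.2) ∧ p.1.1 ∈ S ∧ p.1.2 ∈ S ∧ p.2 ∈ S))
        = ((S ×ˢ S) ×ˢ S).filter fun p => p.1.1 < p.1.2 ∧ p.1.2 < p.2 := by
      ext ⟨⟨a, b⟩, c⟩
      simp only [Finset.mem_filter, Finset.mem_product, Finset.mem_univ, true_and]
      tauto
    rw [this, (count_pairs_triples S).2]
  rw [s1, s2, s3]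
  push_cast
  ring


lemma choose_parity (w : ℕ) (h : w % 4 ≠ 0) : (w + w.choose 2 + w.choose 3) % 2 = 1 := by
  induction w using Nat.strong_induction_on with
  | _ w ih =>
    rcases lt_or_ge w 4 with hw | hw
    · interval_cases w <;> simp_all <;> decide
    · obtain ⟨v, rfl⟩ : ∃ v, w = v + 4 := ⟨w - 4, by omega⟩
      have hv := ih v (by omega) (by omega)
      have c2 : ∀ m : ℕ, (m + 1).choose 2 = m.choose 2 + m := by
        intro m; rw [Nat.choose_succ_succ m 1, Nat.choose_one_right, Nat.add_comm]
      have c3 : ∀ m : ℕ, (m + 1).choose 3 = m.choose 3 + m.choose 2 := by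
        intro m; rw [Nat.choose_succ_succ m 2, Nat.add_comm]
      have h2a := c2 v
      have h2b := c2 (v + 1)
      have h2c := c2 (v + 2)
      have h2d := c2 (v + 3)
      have h3a := c3 v
      have h3b := c3 (v + 1)
      have h3c := c3 (v + 2)
      have h3d := c3 (v + 3)
      have e4 : v + 1 + 1 = v + 2 := by omega
      have e5 : v + 2 + 1 = v + 3 := by omega
      have e6 : v + 3 + 1 = v + 4 := by omega
      rw [e4] at h2b h3b
      rw [e5] at h2c h3c
      rw [e6] at h2d h3d
      omega

lemma natCast_eq_one_of_odd (m : ℕ) (h : m % 2 = 1) : (m : ZMod 2) = 1 := by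
  conv_lhs => rw [← Nat.mod_add_div m 2, h]
  push_cast
  rw [show ((2 : ZMod 2)) = 0 by decide]
  ring

lemma alphaF_one {n : ℕ} (S : Finset (Fin n)) (h : S.card % 4 ≠ 0) :
    alphaF n (chiF S) = 1 := by
  rw [alphaF_chi]
  exact natCast_eq_one_of_odd _ (choose_parity _ h)

lemma chiF_add {n : ℕ} (S T : Finset (Fin n)) : chiF S + chiF T = chiF (S ∆ T) := by
  funext i
  simp only [Pi.add_apply, chiF, Finset.mem_symmDiff]
  by_cases hS : i ∈ S <;> by_cases hT : i ∈ T <;> simp [hS, hT] <;> decide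

lemma chiF_injective {n : ℕ} : Function.Injective (chiF (n := n)) := by
  intro S T h
  have key : ∀ U : Finset (Fin n), Finset.univ.filter (fun i => chiF U i = 1) = U := by
    intro U; ext i
    simp only [Finset.mem_filter, Finset.mem_univ, true_and, chiF]
    by_cases hi : i ∈ U <;> simp [hi]
  rw [← key S, ← key T, h]

lemma main_via {n : ℕ} (F : Finset (Finset (Fin n)))
    (hdiff : ∀ S ∈ F, ∀ T ∈ F, S ≠ T → (S ∆ T).card % 4 ≠ 0) :
    ∃ A : Finset (Fin n → ZMod 2), A.card = F.card ∧
      ∀ x ∈ A, ∀ x' ∈ A, x ≠ x' → alphaF n (x + x') = 1 := by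
  refine ⟨F.image chiF, Finset.card_image_of_injective _ chiF_injective, ?_⟩
  intro x hx x' hx'
  simp only [Finset.mem_image] at hx hx'
  obtain ⟨S, hS, rfl⟩ := hx
  obtain ⟨T, hT, rfl⟩ := hx'
  intro hne
  rw [chiF_add]
  exact alphaF_one _ (hdiff S hS T hT (fun e => hne (by rw [e])))

lemma card_symmDiff_facts {n : ℕ} (S T : Finset (Fin n)) :
    (S ∆ T).card + 2 * (S ∩ T).card = S.card + T.card
      ∧ (S ∩ T).card ≤ S.card ∧ (S ∩ T).card ≤ T.card
      ∧ S.card + T.card - (S ∩ T).card ≤ n := by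
  refine ⟨?_, Finset.card_le_card Finset.inter_subset_left,
    Finset.card_le_card Finset.inter_subset_right, ?_⟩
  · have h1 : S ∆ T = (S \ T) ∪ (T \ S) := by
      ext i; simp [Finset.mem_symmDiff]
    rw [h1, Finset.card_union_of_disjoint disjoint_sdiff_sdiff]
    have h2 := Finset.card_sdiff_add_card_inter S T
    have h3 := Finset.card_sdiff_add_card_inter T S
    rw [Finset.inter_comm T S] at h3
    omega
  · have h4 := Finset.card_union_add_card_inter S T
    have h5 : (S ∪ T).card ≤ n := by
      simpa using Finset.card_le_card (Finset.subset_univ (S ∪ T))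
    omega

lemma symmDiff_ne_zero_card {n : ℕ} {S T : Finset (Fin n)} (h : S ≠ T) :
    (S ∆ T).card ≠ 0 := by
  intro h0
  exact h (symmDiff_eq_bot.mp (Finset.card_eq_zero.mp h0))

lemma case12_card {n : ℕ} (i0 : Fin n) (S T : Finset (Fin n))
    (hS : S.card = 1 ∨ S.card = 0 ∨ (S.card = 2 ∧ i0 ∈ S))
    (hT : T.card = 1 ∨ T.card = 0 ∨ (T.card = 2 ∧ i0 ∈ T))
    (hne : S ≠ T) : (S ∆ T).card % 4 ≠ 0 := by
  obtain ⟨hid, h1, h2, h3⟩ := card_symmDiff_facts S T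
  have h0 := symmDiff_ne_zero_card hne
  rcases hS with h | h | h <;> rcases hT with h' | h' | h' <;>
    (first
      | (have hi : 0 < (S ∩ T).card :=
          Finset.card_pos.mpr ⟨i0, Finset.mem_inter.mpr ⟨h.2, h'.2⟩⟩
         omega)
      | omega)

lemma case3_card {n : ℕ} (hn : n % 4 = 3) (S T : Finset (Fin n))
    (hS : S.card = 0 ∨ S.card = 1 ∨ S.card = n - 1 ∨ S.card = n)
    (hT : T.card = 0 ∨ T.card = 1 ∨ T.card = n - 1 ∨ T.card = n)
    (hne : S ≠ T) : (S ∆ T).card % 4 ≠ 0 := by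
  obtain ⟨hid, h1, h2, h3⟩ := card_symmDiff_facts S T
  have h0 := symmDiff_ne_zero_card hne
  rcases hS with h | h | h | h <;> rcases hT with h' | h' | h' | h' <;> omega





/-- A cubic form on `𝔽₂ⁿ`: a function of the form
`α(x) = Σ_{1 ≤ i ≤ j ≤ k ≤ n} α_{ijk} x_i x_j x_k` with coefficients in `𝔽₂`. -/
def IsCubicForm {n : ℕ} (α : (Fin n → ZMod 2) → ZMod 2) : Prop :=
  ∃ c : Fin n → Fin n → Fin n → ZMod 2,
    ∀ x, α x = ∑ i, ∑ j, ∑ k, if i ≤ j ∧ j ≤ k then c i j k * x i * x j * x k else 0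

/-- The Hurwitz–Radon function evaluated at `2ⁿ`, as a function of `n`. -/
def hurwitzRadonPow2 (n : ℕ) : ℕ :=
  if n % 4 = 0 then 2 * n + 1
  else if n % 4 = 3 then 2 * n + 2
  else 2 * n

/-- For `n ≡ 1, 2` or `3 (mod 4)` the bound `|A| ≤ ρ(2ⁿ)` is sharp: there exist
a cubic form `α` on `𝔽₂ⁿ` and a subset `A ⊆ 𝔽₂ⁿ` with `|A| = ρ(2ⁿ)` such that
`α(x + x') = 1` for all distinct `x, x' ∈ A`. -/
theorem card_le_hurwitzRadon_of_cubicForm_sharp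
    (n : ℕ) (h : n % 4 = 1 ∨ n % 4 = 2 ∨ n % 4 = 3) :
    ∃ α : (Fin n → ZMod 2) → ZMod 2, IsCubicForm α ∧
      ∃ A : Finset (Fin n → ZMod 2), A.card = hurwitzRadonPow2 n ∧
        ∀ x ∈ A, ∀ x' ∈ A, x ≠ x' → α (x + x') = 1 := by
  have hn0 : 0 < n := by omega
  refine ⟨alphaF n, ⟨ccoef n, fun x => rfl⟩, ?_⟩
  by_cases h3 : n % 4 = 3
  · -- n ≡ 3 (mod 4)
    have hn3 : 3 ≤ n := by omega
    set F : Finset (Finset (Fin n)) :=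
      ({⊥, ⊤} : Finset (Finset (Fin n)))
        ∪ Finset.univ.image (fun a : Fin n => ({a} : Finset (Fin n)))
        ∪ Finset.univ.image (fun a : Fin n => ({a}ᶜ : Finset (Fin n))) with hF
    have hclass : ∀ S ∈ F, S.card = 0 ∨ S.card = 1 ∨ S.card = n - 1 ∨ S.card = n := by
      intro S hS
      simp only [hF, Finset.mem_union, Finset.mem_insert, Finset.mem_singleton,
        Finset.mem_image, Finset.mem_univ, true_and] at hS
      rcases hS with ((rfl | rfl) | ⟨a, rfl⟩) | ⟨a, rfl⟩
      · left; simp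
      · right; right; right; simp [Finset.top_eq_univ, Finset.card_univ]
      · right; left; simp
      · right; right; left; simp [Finset.card_compl]
    obtain ⟨A, hAcard, hA⟩ := main_via F
      (fun S hS T hT hne => case3_card h3 S T (hclass S hS) (hclass T hT) hne)
    refine ⟨A, ?_, hA⟩
    rw [hAcard]
    have cardeq : ∀ S ∈ F, True := fun _ _ => trivial
    have c1 : ({⊥, ⊤} : Finset (Finset (Fin n))).card = 2 := by
      rw [Finset.card_insert_of_notMem, Finset.card_singleton]
      simp only [Finset.mem_singleton]
      intro hbt
      have := congrArg Finset.card hbt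
      simp [Finset.top_eq_univ, Finset.card_univ] at this
      omega
    have c2 : (Finset.univ.image (fun a : Fin n => ({a} : Finset (Fin n)))).card = n := by
      rw [Finset.card_image_of_injective _ Finset.singleton_injective, Finset.card_univ,
        Fintype.card_fin]
    have c3 : (Finset.univ.image (fun a : Fin n => ({a}ᶜ : Finset (Fin n)))).card = n := by
      rw [Finset.card_image_of_injective _
        (fun a b hab => Finset.singleton_injective (compl_injective hab)),
        Finset.card_univ, Fintype.card_fin]
    have D1 : Disjoint ({⊥, ⊤} : Finset (Finset (Fin n)))
        (Finset.univ.image (fun a : Fin n => ({a} : Finset (Fin n)))) := by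
      rw [Finset.disjoint_left]
      rintro S hS1 hS2
      simp only [Finset.mem_insert, Finset.mem_singleton] at hS1
      simp only [Finset.mem_image, Finset.mem_univ, true_and] at hS2
      obtain ⟨a, rfl⟩ := hS2
      rcases hS1 with hh | hh <;> have := congrArg Finset.card hh <;>
        simp [Finset.top_eq_univ, Finset.card_univ] at this <;> omega
    have D2 : Disjoint (({⊥, ⊤} : Finset (Finset (Fin n)))
          ∪ Finset.univ.image (fun a : Fin n => ({a} : Finset (Fin n))))
        (Finset.univ.image (fun a : Fin n => ({a}ᶜ : Finset (Fin n)))) := by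
      rw [Finset.disjoint_left]
      rintro S hS1 hS2
      simp only [Finset.mem_image, Finset.mem_univ, true_and] at hS2
      obtain ⟨a, rfl⟩ := hS2
      simp only [Finset.mem_union, Finset.mem_insert, Finset.mem_singleton,
        Finset.mem_image, Finset.mem_univ, true_and] at hS1
      have hca : ({a}ᶜ : Finset (Fin n)).card = n - 1 := by simp [Finset.card_compl]
      rcases hS1 with (hh | hh) | ⟨b, hh⟩ <;> have := congrArg Finset.card hh.symm <;>
        simp [Finset.top_eq_univ, Finset.card_univ, hca] at this <;> omega
    rw [hF, Finset.card_union_of_disjoint D2, Finset.card_union_of_disjoint D1, c1, c2, c3]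
    unfold hurwitzRadonPow2
    rw [if_neg (by omega), if_pos h3]
    omega
  · -- n ≡ 1 or 2 (mod 4)
    set i0 : Fin n := ⟨0, hn0⟩ with hi0
    set F : Finset (Finset (Fin n)) :=
      (Finset.univ.image (fun a : Fin n => ({a} : Finset (Fin n))))
        ∪ (Finset.univ.image (fun a : Fin n => ({i0} ∆ {a} : Finset (Fin n)))) with hF
    have pair_eq : ∀ a : Fin n, a ≠ i0 → ({i0} ∆ {a} : Finset (Fin n)) = {i0, a} := by
      intro a hne
      ext i
      simp only [Finset.mem_symmDiff, Finset.mem_singleton, Finset.mem_insert]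
      constructor
      · rintro (⟨h1, h2⟩ | ⟨h1, h2⟩) <;> tauto
      · rintro (rfl | rfl)
        · exact Or.inl ⟨rfl, fun hh => hne hh.symm⟩
        · exact Or.inr ⟨rfl, fun hh => hne hh⟩
    have hclass : ∀ S ∈ F, S.card = 1 ∨ S.card = 0 ∨ (S.card = 2 ∧ i0 ∈ S) := by
      intro S hS
      simp only [hF, Finset.mem_union, Finset.mem_image, Finset.mem_univ, true_and] at hS
      rcases hS with ⟨a, rfl⟩ | ⟨a, rfl⟩
      · left; simp
      · rcases eq_or_ne a i0 with rfl | hne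
        · right; left; simp [symmDiff_self]
        · right; right
          rw [pair_eq a hne]
          exact ⟨Finset.card_pair (fun hh => hne hh.symm), Finset.mem_insert_self _ _⟩
    obtain ⟨A, hAcard, hA⟩ := main_via F
      (fun S hS T hT hne => case12_card i0 S T (hclass S hS) (hclass T hT) hne)
    refine ⟨A, ?_, hA⟩
    rw [hAcard]
    have c2 : (Finset.univ.image (fun a : Fin n => ({a} : Finset (Fin n)))).card = n := by
      rw [Finset.card_image_of_injective _ Finset.singleton_injective, Finset.card_univ,
        Fintype.card_fin]
    have c3 : (Finset.univ.image (fun a : Fin n => ({i0} ∆ {a} : Finset (Fin n)))).card = n := by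
      rw [Finset.card_image_of_injective _
        (fun a b hab => Finset.singleton_injective (symmDiff_right_injective _ hab)),
        Finset.card_univ, Fintype.card_fin]
    have D1 : Disjoint (Finset.univ.image (fun a : Fin n => ({a} : Finset (Fin n))))
        (Finset.univ.image (fun a : Fin n => ({i0} ∆ {a} : Finset (Fin n)))) := by
      rw [Finset.disjoint_left]
      rintro S hS1 hS2
      simp only [Finset.mem_image, Finset.mem_univ, true_and] at hS1 hS2
      obtain ⟨a, rfl⟩ := hS1
      obtain ⟨b, hb⟩ := hS2
      rcases eq_or_ne b i0 with rfl | hne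
      · rw [symmDiff_self] at hb
        have := congrArg Finset.card hb
        simp at this
      · rw [pair_eq b hne] at hb
        have := congrArg Finset.card hb
        rw [Finset.card_pair (fun hh => hne hh.symm)] at this
        simp at this
    rw [hF, Finset.card_union_of_disjoint D1, c2, c3]
    unfold hurwitzRadonPow2
    rw [if_neg (by omega), if_neg h3]
    omega
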